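/- Balanced batches prevent trivial collapse: for any natural numbers n₀ and n₁ with n₁ ≥ 1 (n₀ the number of in-class samples and n₁ the number of out-of-class samples in a batch), the batch-average HyperCore loss as a function of a common embedding norm r, namely F(r) = (1/(n₀ + n₁)) · (n₀ · h(r) + n₁ · L(r)), tends to +∞ as r tends to 0 from the right. -/
import Mathlib


/-- The pseudo-Huber loss `h(a) = √(a² + 1) − 1`. -/
noncomputable def pseudoHuber (a : ℝ) : ℝ := Real.sqrt (a ^ 2 + 1) - 1

/-- The HyperCore out-of-class loss `L(a) = −log(1 − exp(−h(a)))`. -/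
noncomputable def hyperCoreOut (a : ℝ) : ℝ :=
  -Real.log (1 - Real.exp (-(pseudoHuber a)))

lemma pseudoHuber_cont : Continuous pseudoHuber := by
  unfold pseudoHuber
  fun_prop

lemma pseudoHuber_pos {r : ℝ} (hr : 0 < r) : 0 < pseudoHuber r := by
  unfold pseudoHuber
  have h1 : Real.sqrt 1 < Real.sqrt (r ^ 2 + 1) :=
    Real.sqrt_lt_sqrt (by norm_num) (by nlinarith)
  rw [Real.sqrt_one] at h1
  linarith

lemma hyperCoreOut_tendsto :
    Filter.Tendsto hyperCoreOut (nhdsWithin 0 (Set.Ioi 0)) Filter.atTop := by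
  have h0 : Filter.Tendsto (fun r : ℝ => 1 - Real.exp (-(pseudoHuber r)))
      (nhdsWithin 0 (Set.Ioi 0)) (nhdsWithin 0 (Set.Ioi 0)) := by
    rw [tendsto_nhdsWithin_iff]
    constructor
    · have hc : Continuous (fun r : ℝ => 1 - Real.exp (-(pseudoHuber r))) := by
        have := pseudoHuber_cont; fun_prop
      have h := (hc.tendsto 0).mono_left (nhdsWithin_le_nhds (s := Set.Ioi (0:ℝ)))
      simpa [pseudoHuber] using h
    · filter_upwards [self_mem_nhdsWithin] with r hr
      have h1 : Real.exp (-(pseudoHuber r)) < 1 := by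
        rw [Real.exp_lt_one_iff]
        linarith [pseudoHuber_pos hr]
      simpa [Set.mem_Ioi] using h1
  have hlog := Real.tendsto_log_nhdsGT_zero.comp h0
  have : Filter.Tendsto (fun r : ℝ => -Real.log (1 - Real.exp (-(pseudoHuber r))))
      (nhdsWithin 0 (Set.Ioi 0)) Filter.atTop :=
    Filter.tendsto_neg_atTop_iff.mpr hlog
  exact this
  
/-- Balanced batches prevent trivial collapse: with `n₀` in-class samples and `n₁ ≥ 1`
out-of-class samples, the batch-average HyperCore loss
`F(r) = (1/(n₀ + n₁)) · (n₀ · h(r) + n₁ · L(r))` tends to `+∞` as `r → 0⁺`. -/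
theorem batchAvg_hyperCore_tendsto_atTop (n₀ n₁ : ℕ) (hn₁ : 1 ≤ n₁) :
    Filter.Tendsto
      (fun r : ℝ =>
        (1 / ((n₀ : ℝ) + (n₁ : ℝ))) *
          ((n₀ : ℝ) * pseudoHuber r + (n₁ : ℝ) * hyperCoreOut r))
      (nhdsWithin 0 (Set.Ioi 0)) Filter.atTop := by
  have hn₁' : (0 : ℝ) < (n₁ : ℝ) := by exact_mod_cast hn₁
  have hA : Filter.Tendsto (fun r : ℝ => (n₀ : ℝ) * pseudoHuber r)
      (nhdsWithin 0 (Set.Ioi 0)) (nhds ((n₀ : ℝ) * pseudoHuber 0)) :=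
    ((continuous_const.mul pseudoHuber_cont).tendsto 0).mono_left nhdsWithin_le_nhds
  have hB : Filter.Tendsto (fun r : ℝ => (n₁ : ℝ) * hyperCoreOut r)
      (nhdsWithin 0 (Set.Ioi 0)) Filter.atTop :=
    hyperCoreOut_tendsto.const_mul_atTop hn₁'
  exact (hA.add_atTop hB).const_mul_atTop (by positivity)
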